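/- Let Uⁿ⁺¹ - Uⁿ = 2φⁿ(φⁿ⁺¹ - φⁿ) pointwise. Then Uⁿ⁺¹ - ((φⁿ⁺¹)² - 1) = Uⁿ - ((φⁿ)² - 1) - (φⁿ⁺¹-φⁿ)². Consequently, if U⁰ = (φ⁰)² - 1 and |φᵏ⁺¹ - φᵏ| ≤ Cδt for all 0 ≤ k ≤ n, then |Uⁿ⁺¹ - ((φⁿ⁺¹)² - 1)| ≤ (n+1)C²δt². -/
import Mathlib


/-- IEQ consistency: if `Uᵏ⁺¹ - Uᵏ = 2φᵏ(φᵏ⁺¹-φᵏ)`, then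
`Uᵏ⁺¹ - ((φᵏ⁺¹)²-1) = Uᵏ - ((φᵏ)²-1) - (φᵏ⁺¹-φᵏ)²`; consequently, if
`U⁰ = (φ⁰)²-1` and `|φᵏ⁺¹-φᵏ| ≤ Cδt` for `0 ≤ k ≤ n`, then
`|Uⁿ⁺¹ - ((φⁿ⁺¹)²-1)| ≤ (n+1)C²δt²`. -/
theorem stmt16 (n : ℕ) (C δt : ℝ) (hC : 0 < C) (hδt : 0 < δt)
    (φ U : ℕ → ℝ)
    (hrec : ∀ k ≤ n, U (k + 1) - U k = 2 * φ k * (φ (k + 1) - φ k)) :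
    (∀ k ≤ n, U (k + 1) - ((φ (k + 1)) ^ 2 - 1)
        = U k - ((φ k) ^ 2 - 1) - (φ (k + 1) - φ k) ^ 2) ∧
    (U 0 = (φ 0) ^ 2 - 1 → (∀ k ≤ n, |φ (k + 1) - φ k| ≤ C * δt) →
      |U (n + 1) - ((φ (n + 1)) ^ 2 - 1)| ≤ ((n : ℝ) + 1) * C ^ 2 * δt ^ 2) := by
  have key : ∀ k ≤ n, U (k + 1) - ((φ (k + 1)) ^ 2 - 1)
      = U k - ((φ k) ^ 2 - 1) - (φ (k + 1) - φ k) ^ 2 := by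
    intro k hk
    have h := hrec k hk
    nlinarith [h]
  refine ⟨key, fun h0 hb => ?_⟩
  have H : ∀ m, m ≤ n + 1 → |U m - ((φ m) ^ 2 - 1)| ≤ (m : ℝ) * C ^ 2 * δt ^ 2 := by
    intro m
    induction m with
    | zero => intro _; simp [h0]
    | succ k ih =>
      intro hm
      have hk : k ≤ n := Nat.lt_succ_iff.mp hm
      have h1 := abs_le.mp (ih (Nat.le_succ_of_le hk))
      have h2 := hb k hk
      have h3 : (φ (k + 1) - φ k) ^ 2 ≤ C ^ 2 * δt ^ 2 := by
        nlinarith [abs_nonneg (φ (k + 1) - φ k), sq_abs (φ (k + 1) - φ k)]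
      rw [key k hk, abs_le]
      push_cast
      constructor <;> nlinarith [sq_nonneg (φ (k + 1) - φ k)]
  have := H (n + 1) le_rfl
  push_cast at this
  linarith
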